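/- arXiv:1307.1032 — 3 statements merged into one kernel-verified Lean document; each statement's English description precedes it below -/
import Mathlib

section
/- For every natural number n ≥ 1, setting a_i = n + 1 − i and b_i = n + 1/2 − i in ℚ for 1 ≤ i ≤ n, one has: ∏_{1 ≤ i < j ≤ n} (b_i² − b_j²) · ∏_{i=1}^n (2·b_i) = 2^{−n} · ∏_{1 ≤ i < j ≤ n} (a_i² − a_j²) · ∏_{i=1}^n (2·a_i). -/
open Finset

private lemma prod_Ioi_fin (n : ℕ) (f : ℕ → ℕ → ℚ) :
    ∏ i : Fin n, ∏ j ∈ Finset.Ioi i, f i j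
      = ∏ i ∈ Finset.range n, ∏ j ∈ Finset.Ico (i + 1) n, f i j := by
  rw [← Fin.prod_univ_eq_prod_range (fun i => ∏ j ∈ Finset.Ico (i + 1) n, f i j)]
  refine Finset.prod_congr rfl fun i _ => ?_
  have h1 : ∏ j ∈ Finset.Ioi i, f i j
      = ∏ j ∈ (Finset.Ioi i).map Fin.valEmbedding, f i j := by
    rw [Finset.prod_map]; rfl
  rw [h1, Fin.map_valEmbedding_Ioi]
  refine Finset.prod_congr ?_ fun _ _ => rfl
  ext x
  simp only [Finset.mem_Ioc, Finset.mem_Ioo, Finset.mem_Ico]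
  have := i.isLt
  omega

private lemma key (n : ℕ) :
    (∏ i ∈ Finset.range n, ∏ j ∈ Finset.Ico (i + 1) n, (2 * (n : ℚ) - 1 - i - j))
        * ∏ i ∈ Finset.range n, (2 * (n : ℚ) - 1 - 2 * i)
      = (∏ i ∈ Finset.range n, ∏ j ∈ Finset.Ico (i + 1) n, (2 * (n : ℚ) - i - j))
        * ∏ i ∈ Finset.range n, ((n : ℚ) - i) := by
  rw [← Finset.prod_mul_distrib, ← Finset.prod_mul_distrib]
  refine Finset.prod_congr rfl fun i hi => ?_
  rw [Finset.mem_range] at hi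
  have hl : (∏ j ∈ Finset.Ico (i + 1) n, (2 * (n : ℚ) - 1 - i - j)) * (2 * (n : ℚ) - 1 - 2 * i)
      = ∏ j ∈ Finset.Ico i n, (2 * (n : ℚ) - 1 - i - j) := by
    rw [Finset.prod_eq_prod_Ico_succ_bot hi (fun j => 2 * (n : ℚ) - 1 - i - j), mul_comm]
    congr 1
    ring
  have hr : (∏ j ∈ Finset.Ico (i + 1) n, (2 * (n : ℚ) - i - j)) * ((n : ℚ) - i)
      = ∏ j ∈ Finset.Ico (i + 1) (n + 1), (2 * (n : ℚ) - i - j) := by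
    rw [Finset.prod_Ico_succ_top (by omega : i + 1 ≤ n) (fun j => 2 * (n : ℚ) - i - j)]
    congr 1
    push_cast
    ring
  rw [hl, hr, Finset.prod_Ico_eq_prod_range, Finset.prod_Ico_eq_prod_range]
  rw [show n + 1 - (i + 1) = n - i from by omega]
  refine Finset.prod_congr rfl fun k _ => ?_
  push_cast
  ring

/-- Lemma 6.6 (i): with `a i = n + 1 - i` the coordinates of `ρ^{Sp(2n)}` and
`b i = n + 1/2 - i` the coordinates of `ρ^{SO(2n+1)}`, one has
`ϖ^{Sp(2n)}(ρ^{SO(2n+1)}) = 2^{-n} · ϖ^{Sp(2n)}(ρ^{Sp(2n)})`. -/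
theorem varpiC_at_rhoB_eq_two_pow_neg_n_mul_varpiC_at_rhoC (n : ℕ) (hn : 1 ≤ n)
    (a b : Fin n → ℚ)
    (ha : ∀ i, a i = (n : ℚ) + 1 - ((i : ℕ) + 1))
    (hb : ∀ i, b i = (n : ℚ) + 1 / 2 - ((i : ℕ) + 1)) :
    (∏ i : Fin n, ∏ j ∈ Finset.Ioi i, (b i ^ 2 - b j ^ 2)) * ∏ i : Fin n, (2 * b i)
      = (2 : ℚ) ^ (-(n : ℤ)) *
        ((∏ i : Fin n, ∏ j ∈ Finset.Ioi i, (a i ^ 2 - a j ^ 2)) * ∏ i : Fin n, (2 * a i)) := by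
  have hL : (∏ i : Fin n, ∏ j ∈ Finset.Ioi i, (b i ^ 2 - b j ^ 2))
      = (∏ i : Fin n, ∏ j ∈ Finset.Ioi i, (((j : ℕ) : ℚ) - ((i : ℕ) : ℚ)))
        * ∏ i : Fin n, ∏ j ∈ Finset.Ioi i, (2 * (n : ℚ) - 1 - ((i : ℕ) : ℚ) - ((j : ℕ) : ℚ)) := by
    rw [← Finset.prod_mul_distrib]
    refine Finset.prod_congr rfl fun i _ => ?_
    rw [← Finset.prod_mul_distrib]
    refine Finset.prod_congr rfl fun j _ => ?_
    rw [hb, hb]; ring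
  have hR : (∏ i : Fin n, ∏ j ∈ Finset.Ioi i, (a i ^ 2 - a j ^ 2))
      = (∏ i : Fin n, ∏ j ∈ Finset.Ioi i, (((j : ℕ) : ℚ) - ((i : ℕ) : ℚ)))
        * ∏ i : Fin n, ∏ j ∈ Finset.Ioi i, (2 * (n : ℚ) - ((i : ℕ) : ℚ) - ((j : ℕ) : ℚ)) := by
    rw [← Finset.prod_mul_distrib]
    refine Finset.prod_congr rfl fun i _ => ?_
    rw [← Finset.prod_mul_distrib]
    refine Finset.prod_congr rfl fun j _ => ?_
    rw [ha, ha]; ring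
  have hQb : (∏ i : Fin n, (2 * b i)) = ∏ i : Fin n, (2 * (n : ℚ) - 1 - 2 * ((i : ℕ) : ℚ)) := by
    refine Finset.prod_congr rfl fun i _ => ?_
    rw [hb]; ring
  have hQa : (∏ i : Fin n, (2 * a i)) = 2 ^ n * ∏ i : Fin n, ((n : ℚ) - ((i : ℕ) : ℚ)) := by
    have h : ∀ i : Fin n, 2 * a i = 2 * ((n : ℚ) - ((i : ℕ) : ℚ)) := fun i => by rw [ha]; ring
    rw [Finset.prod_congr rfl fun i _ => h i, Finset.prod_mul_distrib, Finset.prod_const,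
      Finset.card_univ, Fintype.card_fin]
  rw [hL, hR, hQb, hQa]
  have h2 : (2 : ℚ) ^ (-(n : ℤ)) * 2 ^ n = 1 := by
    rw [zpow_neg, zpow_natCast]
    exact inv_mul_cancel₀ (by positivity)
  have hkey :
      (∏ i : Fin n, ∏ j ∈ Finset.Ioi i, (2 * (n : ℚ) - 1 - ((i : ℕ) : ℚ) - ((j : ℕ) : ℚ)))
          * ∏ i : Fin n, (2 * (n : ℚ) - 1 - 2 * ((i : ℕ) : ℚ))
        = (∏ i : Fin n, ∏ j ∈ Finset.Ioi i, (2 * (n : ℚ) - ((i : ℕ) : ℚ) - ((j : ℕ) : ℚ)))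
          * ∏ i : Fin n, ((n : ℚ) - ((i : ℕ) : ℚ)) := by
    rw [prod_Ioi_fin n (fun i j => 2 * (n : ℚ) - 1 - i - j),
      prod_Ioi_fin n (fun i j => 2 * (n : ℚ) - i - j),
      Fin.prod_univ_eq_prod_range (fun i => 2 * (n : ℚ) - 1 - 2 * i) n,
      Fin.prod_univ_eq_prod_range (fun i => (n : ℚ) - i) n]
    exact key n
  calc _ = (∏ i : Fin n, ∏ j ∈ Finset.Ioi i, (((j : ℕ) : ℚ) - ((i : ℕ) : ℚ)))
        * ((∏ i : Fin n, ∏ j ∈ Finset.Ioi i, (2 * (n : ℚ) - 1 - ((i : ℕ) : ℚ) - ((j : ℕ) : ℚ)))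
          * ∏ i : Fin n, (2 * (n : ℚ) - 1 - 2 * ((i : ℕ) : ℚ))) := by ring
    _ = (∏ i : Fin n, ∏ j ∈ Finset.Ioi i, (((j : ℕ) : ℚ) - ((i : ℕ) : ℚ)))
        * ((∏ i : Fin n, ∏ j ∈ Finset.Ioi i, (2 * (n : ℚ) - ((i : ℕ) : ℚ) - ((j : ℕ) : ℚ)))
          * ∏ i : Fin n, ((n : ℚ) - ((i : ℕ) : ℚ))) := by rw [hkey]
    _ = _ := by
        rw [show ((2 : ℚ) ^ (-(n : ℤ)) *
          ((∏ i : Fin n, ∏ j ∈ Finset.Ioi i, (((j : ℕ) : ℚ) - ((i : ℕ) : ℚ)))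
            * (∏ i : Fin n, ∏ j ∈ Finset.Ioi i, (2 * (n : ℚ) - ((i : ℕ) : ℚ) - ((j : ℕ) : ℚ)))
            * (2 ^ n * ∏ i : Fin n, ((n : ℚ) - ((i : ℕ) : ℚ))))) =
          ((2 : ℚ) ^ (-(n : ℤ)) * 2 ^ n) *
          ((∏ i : Fin n, ∏ j ∈ Finset.Ioi i, (((j : ℕ) : ℚ) - ((i : ℕ) : ℚ)))
            * ((∏ i : Fin n, ∏ j ∈ Finset.Ioi i, (2 * (n : ℚ) - ((i : ℕ) : ℚ) - ((j : ℕ) : ℚ)))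
            * ∏ i : Fin n, ((n : ℚ) - ((i : ℕ) : ℚ)))) from by ring, h2, one_mul]
end

section
/- For every natural number n ≥ 1, setting a_i = n + 1 − i and b_i = n + 1/2 − i in ℚ for 1 ≤ i ≤ n, one has: ∏_{1 ≤ i < j ≤ n} (b_i² − b_j²) · ∏_{i=1}^n b_i = 2^{−2n} · ∏_{1 ≤ i < j ≤ n} (a_i² − a_j²) · ∏_{i=1}^n (2·a_i). -/
open Finset

private lemma ratio_lemma (n : ℕ) :
    (2 * (n : ℚ) + 1) * ∏ j ∈ Finset.range n, (2 * (n : ℚ) - j)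
      = ((n : ℚ) + 1) * ∏ j ∈ Finset.range n, (2 * (n : ℚ) + 1 - j) := by
  induction n with
  | zero => simp
  | succ m _ =>
    have h1 : ∏ j ∈ Finset.range (m + 1), (2 * ((m : ℚ) + 1) + 1 - j)
        = (∏ j ∈ Finset.range m, (2 * ((m : ℚ) + 1) - j)) * (2 * ((m : ℚ) + 1) + 1) := by
      rw [Finset.prod_range_succ']
      congr 1
      · exact Finset.prod_congr rfl fun j _ => by push_cast; ring
      · norm_num
    have h2 : ∏ j ∈ Finset.range (m + 1), (2 * ((m : ℚ) + 1) - j)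
        = (∏ j ∈ Finset.range m, (2 * ((m : ℚ) + 1) - j)) * ((m : ℚ) + 2) := by
      rw [Finset.prod_range_succ]
      congr 1
      push_cast; ring
    push_cast
    rw [h1, h2]
    ring


private lemma aux_key (n : ℕ) :
    ((∏ i : Fin n, ∏ j ∈ Finset.Ioi i,
        (((n : ℚ) + 1 / 2 - ((i : ℕ) + 1)) ^ 2 - ((n : ℚ) + 1 / 2 - ((j : ℕ) + 1)) ^ 2)) *
      ∏ i : Fin n, ((n : ℚ) + 1 / 2 - ((i : ℕ) + 1)))
      = (2 : ℚ) ^ (-(2 * n : ℤ)) *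
        ((∏ i : Fin n, ∏ j ∈ Finset.Ioi i,
            (((n : ℚ) + 1 - ((i : ℕ) + 1)) ^ 2 - ((n : ℚ) + 1 - ((j : ℕ) + 1)) ^ 2)) *
          ∏ i : Fin n, (2 * ((n : ℚ) + 1 - ((i : ℕ) + 1)))) := by
  induction n with
  | zero => simp
  | succ m ih =>
    simp only [Fin.prod_univ_succ, Fin.prod_Ioi_zero, Fin.prod_Ioi_succ, Fin.val_zero,
      Fin.val_succ]
    push_cast
    -- normalize the shifted terms
    have hBsucc : ∀ i : Fin m,
        ((m : ℚ) + 1 + 1 / 2 - (((i : ℕ) + 1) + 1)) = (m : ℚ) + 1 / 2 - ((i : ℕ) + 1) := by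
      intro i; ring
    have hAsucc : ∀ i : Fin m,
        ((m : ℚ) + 1 + 1 - (((i : ℕ) + 1) + 1)) = (m : ℚ) + 1 - ((i : ℕ) + 1) := by
      intro i; ring
    simp only [hBsucc, hAsucc]
    have key : (∏ x : Fin m, (((m : ℚ) + 1 + 1 / 2 - (0 + 1)) ^ 2 - ((m : ℚ) + 1 / 2 - ((x : ℕ) + 1)) ^ 2)) *
        ((m : ℚ) + 1 + 1 / 2 - (0 + 1))
        = (2 : ℚ) ^ (-2 : ℤ) *
          ((∏ x : Fin m, (((m : ℚ) + 1 + 1 - (0 + 1)) ^ 2 - ((m : ℚ) + 1 - ((x : ℕ) + 1)) ^ 2)) *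
            (2 * ((m : ℚ) + 1 + 1 - (0 + 1)))) := by
      rw [Fin.prod_univ_eq_prod_range
            (fun j => (((m : ℚ) + 1 + 1 / 2 - (0 + 1)) ^ 2 - ((m : ℚ) + 1 / 2 - ((j : ℚ) + 1)) ^ 2)),
          Fin.prod_univ_eq_prod_range
            (fun j => (((m : ℚ) + 1 + 1 - (0 + 1)) ^ 2 - ((m : ℚ) + 1 - ((j : ℚ) + 1)) ^ 2))]
      have hPB : ∏ j ∈ Finset.range m,
            (((m : ℚ) + 1 + 1 / 2 - (0 + 1)) ^ 2 - ((m : ℚ) + 1 / 2 - ((j : ℚ) + 1)) ^ 2)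
          = ∏ j ∈ Finset.range m, ((2 * (m : ℚ) - j) * ((j : ℚ) + 1)) :=
        Finset.prod_congr rfl fun j _ => by ring
      have hPA : ∏ j ∈ Finset.range m,
            (((m : ℚ) + 1 + 1 - (0 + 1)) ^ 2 - ((m : ℚ) + 1 - ((j : ℚ) + 1)) ^ 2)
          = ∏ j ∈ Finset.range m, ((2 * (m : ℚ) + 1 - j) * ((j : ℚ) + 1)) :=
        Finset.prod_congr rfl fun j _ => by ring
      rw [hPB, hPA, Finset.prod_mul_distrib, Finset.prod_mul_distrib]
      have h4 : (2 : ℚ) ^ (-2 : ℤ) = 1 / 4 := by norm_num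
      rw [h4]
      linear_combination ((∏ j ∈ Finset.range m, ((j : ℚ) + 1)) / 2) * ratio_lemma m
    have hexp : (2 : ℚ) ^ (-(2 * ((m : ℤ) + 1))) = (2 : ℚ) ^ (-2 : ℤ) * (2 : ℚ) ^ (-(2 * (m : ℤ))) := by
      rw [← zpow_add₀ (by norm_num : (2:ℚ) ≠ 0)]
      ring_nf
    push_cast at hexp ⊢
    calc ((∏ x : Fin m, (((m : ℚ) + 1 + 1 / 2 - (0 + 1)) ^ 2 - ((m : ℚ) + 1 / 2 - ((x : ℕ) + 1)) ^ 2)) *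
        ∏ x : Fin m, ∏ y ∈ Finset.Ioi x,
          (((m : ℚ) + 1 / 2 - ((x : ℕ) + 1)) ^ 2 - ((m : ℚ) + 1 / 2 - ((y : ℕ) + 1)) ^ 2)) *
        (((m : ℚ) + 1 + 1 / 2 - (0 + 1)) * ∏ x : Fin m, ((m : ℚ) + 1 / 2 - ((x : ℕ) + 1)))
        = ((∏ x : Fin m, (((m : ℚ) + 1 + 1 / 2 - (0 + 1)) ^ 2 - ((m : ℚ) + 1 / 2 - ((x : ℕ) + 1)) ^ 2)) *
            ((m : ℚ) + 1 + 1 / 2 - (0 + 1))) *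
          ((∏ x : Fin m, ∏ y ∈ Finset.Ioi x,
            (((m : ℚ) + 1 / 2 - ((x : ℕ) + 1)) ^ 2 - ((m : ℚ) + 1 / 2 - ((y : ℕ) + 1)) ^ 2)) *
           ∏ x : Fin m, ((m : ℚ) + 1 / 2 - ((x : ℕ) + 1))) := by ring
      _ = ((2 : ℚ) ^ (-2 : ℤ) *
          ((∏ x : Fin m, (((m : ℚ) + 1 + 1 - (0 + 1)) ^ 2 - ((m : ℚ) + 1 - ((x : ℕ) + 1)) ^ 2)) *
            (2 * ((m : ℚ) + 1 + 1 - (0 + 1))))) *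
          ((2 : ℚ) ^ (-(2 * (m : ℤ))) *
            ((∏ i : Fin m, ∏ j ∈ Finset.Ioi i,
              (((m : ℚ) + 1 - ((i : ℕ) + 1)) ^ 2 - ((m : ℚ) + 1 - ((j : ℕ) + 1)) ^ 2)) *
             ∏ i : Fin m, (2 * ((m : ℚ) + 1 - ((i : ℕ) + 1))))) := by rw [key, ih]
      _ = _ := by rw [hexp]; ring

/-- Lemma 6.6 (ii): with `a i = n + 1 - i` the coordinates of `ρ^{Sp(2n)}` and
`b i = n + 1/2 - i` the coordinates of `ρ^{SO(2n+1)}`, one has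
`ϖ^{SO(2n+1)}(ρ^{SO(2n+1)}) = 2^{-2n} · ϖ^{Sp(2n)}(ρ^{Sp(2n)})`. -/
theorem varpiB_at_rhoB_eq_two_pow_neg_two_n_mul_varpiC_at_rhoC (n : ℕ) (hn : 1 ≤ n)
    (a b : Fin n → ℚ)
    (ha : ∀ i, a i = (n : ℚ) + 1 - ((i : ℕ) + 1))
    (hb : ∀ i, b i = (n : ℚ) + 1 / 2 - ((i : ℕ) + 1)) :
    (∏ i : Fin n, ∏ j ∈ Finset.Ioi i, (b i ^ 2 - b j ^ 2)) * ∏ i : Fin n, b i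
      = (2 : ℚ) ^ (-(2 * n : ℤ)) *
        ((∏ i : Fin n, ∏ j ∈ Finset.Ioi i, (a i ^ 2 - a j ^ 2)) * ∏ i : Fin n, (2 * a i)) := by
  simp only [ha, hb]
  exact aux_key n
end

section
/- For every natural number n ≥ 1, setting b_i = n + 1/2 − i in ℚ for 1 ≤ i ≤ n, one has: ∏_{1 ≤ i < j ≤ n} (b_i² − b_j²) · ∏_{i=1}^n b_i = 2^{−n} · ∏_{k=1}^n (2k − 1)!. -/
open Finset

private lemma natProd (n : ℕ) :
    (∏ j ∈ range n, (((j : ℚ) + 1) * (2 * (n : ℚ) - j))) = ((2 * n).factorial : ℚ) := by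
  have hN : (∏ j ∈ range n, ((j + 1) * (2 * n - j))) = (2 * n).factorial := by
    rw [prod_mul_distrib, prod_range_add_one_eq_factorial, ← Nat.descFactorial_eq_prod_range]
    have h := Nat.factorial_mul_descFactorial (show n ≤ 2 * n by omega)
    rwa [show 2 * n - n = n by omega] at h
  calc (∏ j ∈ range n, (((j : ℚ) + 1) * (2 * (n : ℚ) - j)))
      = ((∏ j ∈ range n, ((j + 1) * (2 * n - j)) : ℕ) : ℚ) := by
        rw [Nat.cast_prod]
        refine prod_congr rfl fun j hj => ?_
        have hj' : j ≤ 2 * n := by have := mem_range.1 hj; omega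
        push_cast [Nat.cast_sub hj']
        ring
    _ = ((2 * n).factorial : ℚ) := by rw [hN]

private lemma auxB : ∀ (n : ℕ) (b : Fin n → ℚ),
    (∀ i, b i = (n : ℚ) + 1 / 2 - ((i : ℕ) + 1)) →
    (∏ i : Fin n, ∏ j ∈ Finset.Ioi i, (b i ^ 2 - b j ^ 2)) * ∏ i : Fin n, b i
      = (2 : ℚ) ^ (-(n : ℤ)) * ∏ k : Fin n, ((2 * ((k : ℕ) + 1) - 1).factorial : ℚ)
  | 0, b, hb => by simp
  | (n + 1), b, hb => by
    set b' : Fin n → ℚ := fun i => b i.succ with hb'def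
    have hb' : ∀ i : Fin n, b' i = (n : ℚ) + 1 / 2 - ((i : ℕ) + 1) := by
      intro i
      simp only [hb'def, hb i.succ, Fin.val_succ]
      push_cast
      ring
    have IH := auxB n b' hb'
    have hb0 : b 0 = (n : ℚ) + 1 / 2 := by
      simp only [hb 0, Fin.val_zero]
      push_cast
      ring
    have hA : ∏ j : Fin n, (b 0 ^ 2 - b' j ^ 2) = ((2 * n).factorial : ℚ) := by
      have hfac : ∀ j : Fin n, b 0 ^ 2 - b' j ^ 2 = (((j : ℕ) : ℚ) + 1) * (2 * (n : ℚ) - (j : ℕ)) := by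
        intro j
        rw [hb0, hb' j]
        ring
      rw [prod_congr rfl fun j _ => hfac j,
        Fin.prod_univ_eq_prod_range (fun j : ℕ => ((j : ℚ) + 1) * (2 * (n : ℚ) - j)) n,
        natProd]
    rw [Fin.prod_univ_succ (f := fun i : Fin (n + 1) => ∏ j ∈ Ioi i, (b i ^ 2 - b j ^ 2)),
      Fin.prod_univ_succ (f := b),
      Fin.prod_univ_castSucc
        (f := fun k : Fin (n + 1) => ((2 * ((k : ℕ) + 1) - 1).factorial : ℚ))]
    simp only [Fin.prod_Ioi_zero, Fin.prod_Ioi_succ, Fin.coe_castSucc, Fin.val_last]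
    have hsb : ∀ j : Fin n, b j.succ = b' j := fun j => rfl
    simp only [hsb]
    have hcast : ((2 * (n + 1) - 1).factorial : ℚ) = (2 * n + 1) * ((2 * n).factorial : ℚ) := by
      rw [show 2 * (n + 1) - 1 = 2 * n + 1 by omega, Nat.factorial_succ]
      push_cast
      ring
    have hpow : (2 : ℚ) ^ (-((n + 1 : ℕ) : ℤ)) = 2 ^ (-(n : ℤ)) / 2 := by
      push_cast
      rw [neg_add, zpow_add₀ (by norm_num : (2 : ℚ) ≠ 0)]
      norm_num
      ring
    rw [hpow, hcast, hA, hb0]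
    linear_combination ((n : ℚ) + 1 / 2) * ((2 * n).factorial : ℚ) * IH

/-- The Steinberg–Macdonald closed form for type `Bₙ`: with `b i = n + 1/2 - i`
the coordinates of `ρ^{SO(2n+1)}`, one has
`ϖ^{SO(2n+1)}(ρ^{SO(2n+1)}) = 2^{-n} · ∏_{k=1}^n (2k-1)!`. -/
theorem varpiB_at_rhoB_closed_form (n : ℕ) (hn : 1 ≤ n)
    (b : Fin n → ℚ)
    (hb : ∀ i, b i = (n : ℚ) + 1 / 2 - ((i : ℕ) + 1)) :
    (∏ i : Fin n, ∏ j ∈ Finset.Ioi i, (b i ^ 2 - b j ^ 2)) * ∏ i : Fin n, b i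
      = (2 : ℚ) ^ (-(n : ℤ)) * ∏ k : Fin n, ((2 * ((k : ℕ) + 1) - 1).factorial : ℚ) := by
  exact auxB n b hb
end
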